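/- Let x : [0,T] → ℝ^n solve ẋ = f(x) + Σ_α g_α(x) u̇^α + Σ_{α,β} h_{αβ}(x) u̇^α u̇^β for a C¹ control u, and let s(t) = ∫₀ᵗ(1 + |u̇|²)dτ with inverse t(s). Then the reparametrized path x̂(s) = (t(s), x(t(s))) satisfies, with a⁰, a^α as defined by the reparametrization, dt/ds = (a⁰)² and dx/ds = f(x)(a⁰)² + Σ_α g_α(x) a⁰ a^α + Σ_{α,β} h_{αβ}(x) a^α a^β; in particular x̂ is a solution of the differential inclusion dx̂/ds ∈ F(x̂) with F as defined from f, g_α, h_{αβ}. -/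

import Mathlib

/-- The reparametrized path `x̂(s) = (t(s), x(t(s)))` of a solution of the
impulsive system solves the rescaled system, and hence the differential
inclusion `dx̂/ds ∈ F(x̂)`. -/
theorem reparametrized_solves_inclusion (n m : ℕ) (T : ℝ) (hT : 0 < T)
    (f : EuclideanSpace ℝ (Fin n) → EuclideanSpace ℝ (Fin n))
    (g : Fin m → EuclideanSpace ℝ (Fin n) → EuclideanSpace ℝ (Fin n))
    (h : Fin m → Fin m → EuclideanSpace ℝ (Fin n) → EuclideanSpace ℝ (Fin n))
    (Kf Kg Kh : NNReal)
    (hf : LipschitzWith Kf f) (hg : ∀ α, LipschitzWith Kg (g α))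
    (hh : ∀ α β, LipschitzWith Kh (h α β))
    (u u' : ℝ → Fin m → ℝ)
    (hu : ∀ τ, HasDerivAt u (u' τ) τ) (hu' : Continuous u')
    (x : ℝ → EuclideanSpace ℝ (Fin n))
    (hx : ∀ t ∈ Set.Icc 0 T, HasDerivAt x
      (f (x t) + ∑ α, u' t α • g α (x t)
        + ∑ α, ∑ β, (u' t α * u' t β) • h α β (x t)) t)
    (s : ℝ → ℝ)
    (hs : ∀ t, s t = ∫ τ in (0:ℝ)..t, (1 + ∑ α, (u' τ α)^2))
    (tinv : ℝ → ℝ) (htinv : ∀ τ ∈ Set.Icc 0 T, tinv (s τ) = τ)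
    (htinv' : ∀ r ∈ Set.Icc 0 (s T), tinv r ∈ Set.Icc 0 T)
    (a0 : ℝ → ℝ) (a : ℝ → Fin m → ℝ)
    (ha0 : ∀ r, a0 r = 1 / Real.sqrt (1 + ∑ α, (u' (tinv r) α)^2))
    (ha : ∀ r α, a r α = u' (tinv r) α / Real.sqrt (1 + ∑ β, (u' (tinv r) β)^2))
    (F : EuclideanSpace ℝ (Fin n) → Set (ℝ × EuclideanSpace ℝ (Fin n)))
    (hF : ∀ y, F y = closure (convexHull ℝ
      {z | ∃ b : Fin (m+1) → ℝ, b 0 ∈ Set.Icc (0:ℝ) 1 ∧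
        (∑ α, (b α)^2) = 1 ∧
        z = ((b 0)^2, (b 0)^2 • f y + ∑ α : Fin m, (b 0 * b α.succ) • g α y
          + ∑ α : Fin m, ∑ β : Fin m, (b α.succ * b β.succ) • h α β y)})) :
    ∀ r ∈ Set.Icc 0 (s T),
      HasDerivWithinAt tinv ((a0 r)^2) (Set.Icc 0 (s T)) r ∧
      HasDerivWithinAt (fun ρ => x (tinv ρ))
        ((a0 r)^2 • f (x (tinv r)) + ∑ α, (a0 r * a r α) • g α (x (tinv r))
          + ∑ α, ∑ β, (a r α * a r β) • h α β (x (tinv r)))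
        (Set.Icc 0 (s T)) r ∧
      (((a0 r)^2 : ℝ),
        (a0 r)^2 • f (x (tinv r)) + ∑ α, (a0 r * a r α) • g α (x (tinv r))
          + ∑ α, ∑ β, (a r α * a r β) • h α β (x (tinv r)))
        ∈ F (x (tinv r)) := by
  -- the integrand
  set P : ℝ → ℝ := fun τ => 1 + ∑ α, (u' τ α)^2 with hPdef
  have hPcont : Continuous P := by
    apply continuous_const.add
    exact continuous_finset_sum _ fun α _ => ((continuous_apply α).comp hu').pow 2
  have hP1 : ∀ τ, 1 ≤ P τ := fun τ =>
    le_add_of_nonneg_right (Finset.sum_nonneg fun α _ => sq_nonneg _)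
  have hP0 : ∀ τ, 0 < P τ := fun τ => lt_of_lt_of_le one_pos (hP1 τ)
  have hseq : s = fun t => ∫ τ in (0:ℝ)..t, P τ := funext hs
  have hsd : ∀ t, HasDerivAt s (P t) t := by
    intro t
    rw [hseq]
    exact (hPcont.integral_hasStrictDerivAt 0 t).hasDerivAt
  have hscont : Continuous s := by
    rw [continuous_iff_continuousAt]; exact fun t => (hsd t).continuousAt
  have hsm : StrictMono s := by
    apply strictMono_of_deriv_pos
    intro t; rw [(hsd t).deriv]; exact hP0 t
  have hs0 : s 0 = 0 := by rw [hseq]; simp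
  have hsurj : Set.SurjOn s (Set.Icc 0 T) (Set.Icc 0 (s T)) := by
    have := intermediate_value_Icc hT.le hscont.continuousOn
    rwa [hs0] at this
  have hA : ∀ r ∈ Set.Icc 0 (s T), s (tinv r) = r := by
    intro r hr
    obtain ⟨τ, hτ, hsτ⟩ := hsurj hr
    rw [← hsτ, htinv τ hτ]
  -- the order isomorphism and continuity of tinv on [0, s T]
  have hmemIcc : ∀ τ : Set.Icc (0:ℝ) T, s τ ∈ Set.Icc 0 (s T) := by
    rintro ⟨τ, h0, hτT⟩
    exact ⟨le_of_eq_of_le hs0.symm (hsm.monotone h0), hsm.monotone hτT⟩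
  set σ : Set.Icc (0:ℝ) T → Set.Icc (0:ℝ) (s T) := fun τ => ⟨s τ, hmemIcc τ⟩ with hσdef
  have hσm : StrictMono σ := fun p q hpq => Subtype.mk_lt_mk.mpr (hsm hpq)
  have hσs : Function.Surjective σ := by
    rintro ⟨r, hr⟩
    exact ⟨⟨tinv r, htinv' r hr⟩, Subtype.ext (hA r hr)⟩
  have hct : ContinuousOn tinv (Set.Icc 0 (s T)) := by
    rw [continuousOn_iff_continuous_restrict]
    have he : (Set.Icc 0 (s T)).domRestrict tinv = fun r =>
        (((StrictMono.orderIsoOfSurjective σ hσm hσs).symm r : Set.Icc (0:ℝ) T) : ℝ) := by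
      funext p
      obtain ⟨r, hr⟩ := p
      have h1 : (StrictMono.orderIsoOfSurjective σ hσm hσs).symm ⟨r, hr⟩
          = ⟨tinv r, htinv' r hr⟩ := by
        rw [OrderIso.symm_apply_eq]
        exact (Subtype.ext (hA r hr)).symm
      show tinv r = _
      rw [h1]
    rw [he]
    exact continuous_subtype_val.comp
      (StrictMono.orderIsoOfSurjective σ hσm hσs).symm.continuous
  intro r hr
  set t0 := tinv r with ht0def
  have ht0 : t0 ∈ Set.Icc 0 T := htinv' r hr
  have hst0 : s t0 = r := hA r hr
  have hq2 : Real.sqrt (P t0) ^ 2 = P t0 := Real.sq_sqrt (hP0 t0).le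
  have hkey : (a0 r)^2 = (P t0)⁻¹ := by
    rw [ha0, div_pow, one_pow, ← ht0def, hq2, one_div]
  -- derivative of tinv
  have hd1 : HasDerivWithinAt tinv ((a0 r)^2) (Set.Icc 0 (s T)) r := by
    rw [hkey, hasDerivWithinAt_iff_tendsto_slope]
    have hG : Filter.Tendsto (fun y => (slope s t0 y)⁻¹) (nhdsWithin t0 {t0}ᶜ)
        (nhds ((P t0)⁻¹)) :=
      (hasDerivAt_iff_tendsto_slope.mp (hsd t0)).inv₀ (hP0 t0).ne'
    have htt : Filter.Tendsto tinv (nhdsWithin r (Set.Icc 0 (s T) \ {r}))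
        (nhdsWithin t0 {t0}ᶜ) := by
      rw [tendsto_nhdsWithin_iff]
      constructor
      · exact ((hct r hr).mono Set.diff_subset).tendsto
      · filter_upwards [self_mem_nhdsWithin] with ρ hρ
        intro hcon
        apply hρ.2
        have : s (tinv ρ) = s t0 := by rw [hcon]
        rw [hA ρ hρ.1, hst0] at this
        exact this
    refine Filter.Tendsto.congr' ?_ (hG.comp htt)
    filter_upwards [self_mem_nhdsWithin] with ρ hρ
    have hρI := hρ.1
    have hρne : ρ ≠ r := hρ.2
    have htne : tinv ρ ≠ t0 := by
      intro hcon
      apply hρne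
      have : s (tinv ρ) = s t0 := by rw [hcon]
      rwa [hA ρ hρI, hst0] at this
    show ((slope s t0 (tinv ρ))⁻¹) = slope tinv r ρ
    rw [slope_def_field, slope_def_field, hA ρ hρI, hst0, ← ht0def, inv_div]
  refine ⟨hd1, ?_, ?_⟩
  -- derivative of x ∘ tinv
  · have hx' := hx t0 ht0
    have hcomp := hx'.scomp_hasDerivWithinAt (x := r) hd1
    have hscal1 : ∀ α, a0 r * a r α = (a0 r)^2 * u' t0 α := by
      intro α
      rw [ha0, ha, ← ht0def]
      ring
    have hscal2 : ∀ α β, a r α * a r β = (a0 r)^2 * (u' t0 α * u' t0 β) := by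
      intro α β
      rw [ha0, ha, ha, ← ht0def]
      ring
    have heq : (a0 r)^2 • (f (x t0) + ∑ α, u' t0 α • g α (x t0)
        + ∑ α, ∑ β, (u' t0 α * u' t0 β) • h α β (x t0))
        = (a0 r)^2 • f (x t0) + ∑ α, (a0 r * a r α) • g α (x t0)
          + ∑ α, ∑ β, (a r α * a r β) • h α β (x t0) := by
      simp only [smul_add, Finset.smul_sum, smul_smul, hscal1, hscal2]
    rw [← heq]
    exact hcomp
  -- membership in F
  · rw [hF]
    apply subset_closure
    apply subset_convexHull
    refine ⟨Fin.cons (a0 r) (a r), ?_, ?_, ?_⟩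
    · rw [Fin.cons_zero, ha0, ← ht0def]
      constructor
      · positivity
      · rw [div_le_one (Real.sqrt_pos.mpr (hP0 t0))]
        exact Real.one_le_sqrt.mpr (hP1 t0)
    · rw [Fin.sum_univ_succ]
      simp only [Fin.cons_zero, Fin.cons_succ]
      rw [ha0, ← ht0def]
      have haeq : ∀ α, a r α = u' t0 α / Real.sqrt (P t0) := fun α => by
        rw [ha, ← ht0def]
      simp only [haeq, div_pow, one_pow]
      rw [← Finset.sum_div, ← add_div, hq2]
      exact div_self (hP0 t0).ne'
    · simp only [Fin.cons_zero, Fin.cons_succ]
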